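/- Let k = ℝ or ℂ, n ≥ 2, and ε > 0. Let x ∈ k^n be a unit vector with min_{1≤i≤n} |x_i| ≥ 100·ε, let y ∈ k^n be a unit vector with d_ℙ([y], [x]) ≤ ε/2, let 0 < ζ < ε⁴/100, and let g ∈ GL_n(k) be an invertible diagonal matrix. Assume moreover that there is a hyperplane V ⊂ k^n such that g^q·B_ε([x]) ⊆ ℙ(k^n) \ N_ε(ℙ(V)) for every integer q ≠ 0. Then for every integer p ≠ 0 and every nonzero y' ∈ k^n with d_ℙ([y'], [y]) ≤ ζ one has d_ℙ([g^p y'], [g^p y]) ≤ (ζ/ε²) · (ℓ_2(g^p)/ℓ_1(g^p)), where for an invertible diagonal matrix h, ℓ_1(h) ≥ ℓ_2(h) denote the largest and second largest values among the absolute values of the diagonal entries of h (counted with multiplicity). -/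

import Mathlib

noncomputable section

/-- Euclidean norm on `Fin n → 𝕜`. -/
def eN {𝕜 : Type*} [RCLike 𝕜] {n : ℕ} (v : Fin n → 𝕜) : ℝ :=
  Real.sqrt (∑ i, ‖v i‖ ^ 2)

/-- Projective distance between (the lines spanned by) two nonzero vectors:
the infimum of `‖ζ·u₀ − v₀‖` over unit representatives `u₀, v₀` and scalars `ζ` of
absolute value one. -/
def dP {𝕜 : Type*} [RCLike 𝕜] {n : ℕ} (u v : Fin n → 𝕜) : ℝ :=
  sInf {r : ℝ | ∃ a b ζ : 𝕜, eN (a • u) = 1 ∧ eN (b • v) = 1 ∧ ‖ζ‖ = 1 ∧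
    r = eN (ζ • a • u - b • v)}

/-- Distance from (the projective point of) a nonzero vector to the projectivization of a
subspace. -/
def distPS {𝕜 : Type*} [RCLike 𝕜] {n : ℕ} (u : Fin n → 𝕜)
    (W : Submodule 𝕜 (Fin n → 𝕜)) : ℝ :=
  sInf {r : ℝ | ∃ w : Fin n → 𝕜, w ∈ W ∧ w ≠ 0 ∧ r = dP u w}

namespace Stmt10Aux

variable {𝕜 : Type*} [RCLike 𝕜] {n : ℕ}

def toE (v : Fin n → 𝕜) : EuclideanSpace 𝕜 (Fin n) := (WithLp.equiv 2 (Fin n → 𝕜)).symm v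

lemma eN_eq (v : Fin n → 𝕜) : eN v = ‖toE v‖ := by
  rw [EuclideanSpace.norm_eq]; rfl

lemma eN_nonneg (v : Fin n → 𝕜) : 0 ≤ eN v := Real.sqrt_nonneg _

lemma toE_smul (c : 𝕜) (v : Fin n → 𝕜) : toE (c • v) = c • toE v := rfl
lemma toE_sub (u v : Fin n → 𝕜) : toE (u - v) = toE u - toE v := rfl
lemma toE_add (u v : Fin n → 𝕜) : toE (u + v) = toE u + toE v := rfl

lemma eN_smul (c : 𝕜) (v : Fin n → 𝕜) : eN (c • v) = ‖c‖ * eN v := by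
  rw [eN_eq, eN_eq, toE_smul, norm_smul]

lemma eN_add_le (u v : Fin n → 𝕜) : eN (u + v) ≤ eN u + eN v := by
  rw [eN_eq, eN_eq, eN_eq, toE_add]; exact norm_add_le _ _

lemma eN_eq_zero {v : Fin n → 𝕜} : eN v = 0 ↔ v = 0 := by
  rw [eN_eq, norm_eq_zero]
  exact (WithLp.equiv 2 (Fin n → 𝕜)).symm.injective.eq_iff' rfl

lemma eN_pos {v : Fin n → 𝕜} (hv : v ≠ 0) : 0 < eN v :=
  lt_of_le_of_ne (eN_nonneg v) (fun h => hv (eN_eq_zero.mp h.symm))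

lemma abs_eN_sub_eN_le (u v : Fin n → 𝕜) : |eN u - eN v| ≤ eN (u - v) := by
  rw [eN_eq, eN_eq, eN_eq, toE_sub]
  exact abs_norm_sub_norm_le _ _

lemma eN_neg (v : Fin n → 𝕜) : eN (-v) = eN v := by
  have : (-1 : 𝕜) • v = -v := by simp
  rw [← this, eN_smul]; simp

lemma coord_le_eN (v : Fin n → 𝕜) (i : Fin n) : ‖v i‖ ≤ eN v :=
  Real.le_sqrt_of_sq_le (Finset.single_le_sum (f := fun j => ‖v j‖ ^ 2)
    (fun j _ => by positivity) (Finset.mem_univ i))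

/-- The defining set of `dP` is bounded below by 0. -/
lemma dP_bddBelow (u v : Fin n → 𝕜) :
    BddBelow {r : ℝ | ∃ a b ζ : 𝕜, eN (a • u) = 1 ∧ eN (b • v) = 1 ∧ ‖ζ‖ = 1 ∧
      r = eN (ζ • a • u - b • v)} := by
  refine ⟨0, fun r hr => ?_⟩
  obtain ⟨a, b, ζ, _, _, _, hr⟩ := hr
  rw [hr]; exact eN_nonneg _

lemma dP_set_nonempty (u v : Fin n → 𝕜) (hu : u ≠ 0) (hv : v ≠ 0) :
    Set.Nonempty {r : ℝ | ∃ a b ζ : 𝕜, eN (a • u) = 1 ∧ eN (b • v) = 1 ∧ ‖ζ‖ = 1 ∧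
      r = eN (ζ • a • u - b • v)} := by
  refine ⟨_, ((eN u : ℝ) : 𝕜)⁻¹, ((eN v : ℝ) : 𝕜)⁻¹, 1, ?_, ?_, ?_, rfl⟩
  · rw [eN_smul, norm_inv, RCLike.norm_ofReal, abs_of_nonneg (eN_nonneg u),
      inv_mul_cancel₀ (ne_of_gt (eN_pos hu))]
  · rw [eN_smul, norm_inv, RCLike.norm_ofReal, abs_of_nonneg (eN_nonneg v),
      inv_mul_cancel₀ (ne_of_gt (eN_pos hv))]
  · simp

/-- Comparing normalizations. -/
lemma normalize_diff_le (U V : Fin n → 𝕜) (hU : 0 < eN U) (hV : 0 < eN V) :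
    eN (((eN U : ℝ) : 𝕜)⁻¹ • U - ((eN V : ℝ) : 𝕜)⁻¹ • V) ≤ 2 * eN (U - V) / eN U := by
  have key : ((eN U : ℝ) : 𝕜)⁻¹ • U - ((eN V : ℝ) : 𝕜)⁻¹ • V
      = ((eN U : ℝ) : 𝕜)⁻¹ • (U - V) + ((((eN U : ℝ) : 𝕜))⁻¹ - (((eN V : ℝ) : 𝕜))⁻¹) • V := by
    rw [smul_sub, sub_smul]; abel
  rw [key]
  have h1 : eN (((eN U : ℝ) : 𝕜)⁻¹ • (U - V)) = (eN U)⁻¹ * eN (U - V) := by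
    rw [eN_smul, norm_inv, RCLike.norm_ofReal, abs_of_nonneg (eN_nonneg U)]
  have h2 : eN (((((eN U : ℝ) : 𝕜))⁻¹ - (((eN V : ℝ) : 𝕜))⁻¹) • V)
      = |(eN U)⁻¹ - (eN V)⁻¹| * eN V := by
    rw [eN_smul]
    congr 1
    rw [← RCLike.ofReal_inv, ← RCLike.ofReal_inv, ← RCLike.ofReal_sub, RCLike.norm_ofReal]
  have h3 : |(eN U)⁻¹ - (eN V)⁻¹| * eN V ≤ eN (U - V) / eN U := by
    have : |(eN U)⁻¹ - (eN V)⁻¹| = |eN V - eN U| / (eN U * eN V) := by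
      rw [inv_sub_inv (ne_of_gt hU) (ne_of_gt hV)]
      rw [abs_div, abs_of_pos (mul_pos hU hV)]
    rw [this]
    have hVU : |eN V - eN U| ≤ eN (U - V) := by
      have := abs_eN_sub_eN_le V U
      rwa [show V - U = -(U - V) by abel, eN_neg] at this
    calc |eN V - eN U| / (eN U * eN V) * eN V
        = |eN V - eN U| / eN U := by field_simp
      _ ≤ eN (U - V) / eN U := by exact div_le_div_of_nonneg_right hVU hU.le
  calc eN _ ≤ eN (((eN U : ℝ) : 𝕜)⁻¹ • (U - V))
        + eN (((((eN U : ℝ) : 𝕜))⁻¹ - (((eN V : ℝ) : 𝕜))⁻¹) • V) := eN_add_le _ _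
    _ ≤ (eN U)⁻¹ * eN (U - V) + eN (U - V) / eN U := by
        rw [h1, h2]; exact add_le_add le_rfl h3
    _ = 2 * eN (U - V) / eN U := by field_simp; ring

end Stmt10Aux

set_option maxHeartbeats 1000000 in
open Stmt10Aux in
/-- contraction estimate for powers of an invertible diagonal matrix `g`
near a projective point `[y]` close to a point `[x]` with all coordinates bounded below,
assuming all nonzero powers of `g` map `B_ε([x])` off a neighborhood of a hyperplane:
`d_ℙ([g^p y'], [g^p y]) ≤ (ζ/ε²)·(ℓ₂(g^p)/ℓ₁(g^p))`. -/
theorem stmt10 {𝕜 : Type*} [RCLike 𝕜] (n : ℕ) (hn : 2 ≤ n) (ε : ℝ) (hε : 0 < ε)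
    (x : Fin n → 𝕜) (hx1 : eN x = 1) (hxmin : ∀ i, 100 * ε ≤ ‖x i‖)
    (y : Fin n → 𝕜) (hy1 : eN y = 1) (hyx : dP y x ≤ ε / 2)
    (ζ : ℝ) (hζ0 : 0 < ζ) (hζ : ζ < ε ^ 4 / 100)
    (a : Fin n → 𝕜) (ha : ∀ i, a i ≠ 0)
    (hV : ∃ V : Submodule 𝕜 (Fin n → 𝕜), Module.finrank 𝕜 V = n - 1 ∧
      ∀ q : ℤ, q ≠ 0 → ∀ u : Fin n → 𝕜, u ≠ 0 → dP x u ≤ ε →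
        ε ≤ distPS ((Matrix.diagonal fun i => a i ^ q).mulVec u) V) :
    ∀ p : ℤ, p ≠ 0 → ∀ y' : Fin n → 𝕜, y' ≠ 0 → dP y' y ≤ ζ →
      dP ((Matrix.diagonal fun i => a i ^ p).mulVec y')
          ((Matrix.diagonal fun i => a i ^ p).mulVec y) ≤
        (ζ / ε ^ 2) *
          ((⨆ pr : {pr : Fin n × Fin n // pr.1 ≠ pr.2}, min ‖a (pr : Fin n × Fin n).1 ^ p‖ ‖a (pr : Fin n × Fin n).2 ^ p‖) /
            (⨆ i, ‖a i ^ p‖)) := by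
  clear hV
  intro p hp y' hy'0 hy'y
  classical
  haveI : Nonempty (Fin n) := ⟨⟨0, by omega⟩⟩
  haveI : Nontrivial (Fin n) := Fin.nontrivial_iff_two_le.mpr hn
  set D := Matrix.diagonal (fun i => a i ^ p) with hD
  have heN0 : eN (0 : Fin n → 𝕜) = 0 := eN_eq_zero.mpr rfl
  have hy0 : y ≠ 0 := fun h => by rw [h, heN0] at hy1; norm_num at hy1
  have hx0 : x ≠ 0 := fun h => by rw [h, heN0] at hx1; norm_num at hx1
  have hε100 : 100 * ε ≤ 1 := le_trans (hxmin ⟨0, by omega⟩)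
    (by rw [← hx1]; exact coord_le_eN x _)
  -- coordinates of y are at least 99 ε
  have hycoord : ∀ i, 99 * ε ≤ ‖y i‖ := by
    obtain ⟨r, hrmem, hrlt⟩ := Real.lt_sInf_add_pos (dP_set_nonempty y x hy0 hx0)
      (show (0:ℝ) < ε/4 by linarith)
    obtain ⟨a₁, b₁, ζ₁, ha₁, hb₁, hζ₁, hr⟩ := hrmem
    have hna₁ : ‖a₁‖ = 1 := by rw [eN_smul, hy1, mul_one] at ha₁; exact ha₁
    have hnb₁ : ‖b₁‖ = 1 := by rw [eN_smul, hx1, mul_one] at hb₁; exact hb₁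
    have hrε : r < 3*ε/4 := by
      have hd : sInf {r | ∃ a b ζ : 𝕜, eN (a • y) = 1 ∧ eN (b • x) = 1 ∧ ‖ζ‖ = 1 ∧
          r = eN (ζ • a • y - b • x)} ≤ ε / 2 := hyx
      linarith
    intro i
    have h1 : ‖(ζ₁ • a₁ • y - b₁ • x) i‖ ≤ r := by rw [hr]; exact coord_le_eN _ i
    have h2 : (ζ₁ • a₁ • y - b₁ • x) i = ζ₁ * (a₁ * y i) - b₁ * x i := rfl
    have h3 : ‖b₁ * x i‖ - ‖ζ₁ * (a₁ * y i)‖ ≤ ‖ζ₁ * (a₁ * y i) - b₁ * x i‖ := by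
      rw [norm_sub_rev]; exact norm_sub_norm_le _ _
    rw [h2] at h1
    have h4 : ‖ζ₁ * (a₁ * y i)‖ = ‖y i‖ := by
      rw [norm_mul, norm_mul, hζ₁, hna₁, one_mul, one_mul]
    have h5 : ‖b₁ * x i‖ = ‖x i‖ := by rw [norm_mul, hnb₁, one_mul]
    have h6 := hxmin i
    rw [h4, h5] at h3
    linarith
  -- near-minimizing representatives for y', y
  obtain ⟨r₀, hr₀mem, hr₀lt⟩ := Real.lt_sInf_add_pos (dP_set_nonempty y' y hy'0 hy0) hζ0
  obtain ⟨a₀, b₀, ζ₀, ha₀, hb₀, hζ₀n, hr₀⟩ := hr₀mem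
  have hr₀2ζ : r₀ < 2*ζ := by
    have hd : sInf {r | ∃ a b ζ' : 𝕜, eN (a • y') = 1 ∧ eN (b • y) = 1 ∧ ‖ζ'‖ = 1 ∧
        r = eN (ζ' • a • y' - b • y)} ≤ ζ := hy'y
    linarith
  set Y' : Fin n → 𝕜 := ζ₀ • a₀ • y' with hY'def
  set Y : Fin n → 𝕜 := b₀ • y with hYdef
  have hnb₀ : ‖b₀‖ = 1 := by rw [eN_smul, hy1, mul_one] at hb₀; exact hb₀
  have heNY : eN Y = 1 := hb₀
  have hYY' : eN (Y' - Y) < 2*ζ := by rw [← hr₀]; exact hr₀2ζ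
  have hζε : ζ ≤ ε/100 := by nlinarith [pow_pos hε 2, pow_pos hε 3, sq_nonneg ε]
  have hYc : ∀ i, 99*ε ≤ ‖Y i‖ := by
    intro i
    have : Y i = b₀ * y i := rfl
    rw [this, norm_mul, hnb₀, one_mul]
    exact hycoord i
  have hY'c : ∀ i, 98*ε ≤ ‖Y' i‖ := by
    intro i
    have h1 : ‖Y i‖ - ‖Y' i‖ ≤ ‖Y' i - Y i‖ := by rw [norm_sub_rev]; exact norm_sub_norm_le _ _
    have h2 : ‖Y' i - Y i‖ ≤ eN (Y' - Y) := by
      have : Y' i - Y i = (Y' - Y) i := rfl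
      rw [this]; exact coord_le_eN _ i
    have := hYc i
    linarith
  -- the two largest absolute values
  obtain ⟨i₁, hi₁⟩ := Finite.exists_max (fun i => ‖a i ^ p‖)
  have hl1 : (⨆ i, ‖a i ^ p‖) = ‖a i₁ ^ p‖ :=
    le_antisymm (ciSup_le hi₁) (le_ciSup (f := fun i => ‖a i ^ p‖) (Set.Finite.bddAbove (Set.finite_range _)) i₁)
  set ℓ₁ := ‖a i₁ ^ p‖ with hℓ₁def
  have hℓ₁pos : 0 < ℓ₁ := norm_pos_iff.mpr (zpow_ne_zero p (ha i₁))
  set ℓ₂ := ⨆ pr : {pr : Fin n × Fin n // pr.1 ≠ pr.2},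
    min ‖a (pr : Fin n × Fin n).1 ^ p‖ ‖a (pr : Fin n × Fin n).2 ^ p‖ with hℓ₂def
  haveI : Nonempty {pr : Fin n × Fin n // pr.1 ≠ pr.2} := by
    obtain ⟨j, hj⟩ := exists_ne i₁
    exact ⟨⟨(i₁, j), hj.symm⟩⟩
  have hℓ₂ge : ∀ j, j ≠ i₁ → ‖a j ^ p‖ ≤ ℓ₂ := by
    intro j hj
    have hmem := le_ciSup (f := fun pr : {pr : Fin n × Fin n // pr.1 ≠ pr.2} =>
        min ‖a (pr : Fin n × Fin n).1 ^ p‖ ‖a (pr : Fin n × Fin n).2 ^ p‖)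
      (Set.Finite.bddAbove (Set.finite_range _)) ⟨(i₁, j), Ne.symm hj⟩
    simp only at hmem
    rwa [min_eq_right (hi₁ j)] at hmem
  have hℓ₂nonneg : 0 ≤ ℓ₂ := by
    obtain ⟨j, hj⟩ := exists_ne i₁
    exact le_trans (norm_nonneg _) (hℓ₂ge j hj)
  -- the auxiliary scalar lam and vector Z
  have hYi₁ : Y i₁ ≠ 0 := by
    intro h
    have := hYc i₁
    rw [h, norm_zero] at this
    linarith
  set lam : 𝕜 := Y' i₁ / Y i₁ with hlamdef
  set Z : Fin n → 𝕜 := Y' - lam • Y with hZdef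
  have hZi₁ : Z i₁ = 0 := by
    have : Z i₁ = Y' i₁ - (Y' i₁ / Y i₁) * Y i₁ := rfl
    rw [this, div_mul_cancel₀ _ hYi₁, sub_self]
  have h1lam : ‖1 - lam‖ ≤ 2*ζ/(99*ε) := by
    have heq : (1 : 𝕜) - lam = (Y i₁ - Y' i₁)/Y i₁ := by
      field_simp [hlamdef]
      rw [hlamdef, sub_mul, one_mul, div_mul_cancel₀ _ hYi₁]
    rw [heq, norm_div]
    have hnum : ‖Y i₁ - Y' i₁‖ ≤ 2*ζ := by
      have h2 : ‖Y i₁ - Y' i₁‖ ≤ eN (Y - Y') := by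
        have : Y i₁ - Y' i₁ = (Y - Y') i₁ := rfl
        rw [this]; exact coord_le_eN _ i₁
      have h3 : eN (Y - Y') = eN (Y' - Y) := by
        rw [show Y - Y' = -(Y' - Y) by abel, eN_neg]
      linarith
    exact div_le_div₀ (by linarith) hnum (by linarith) (hYc i₁)
  have hZbound : eN Z ≤ 4*ζ/(99*ε) := by
    have h1 : Z = (Y' - Y) + (1 - lam) • Y := by
      rw [hZdef, sub_smul, one_smul]; abel
    have h99 : (0:ℝ) < 99*ε := by linarith
    have h2 : 2*ζ ≤ 2*ζ/(99*ε) := by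
      rw [le_div_iff₀ h99]; nlinarith
    calc eN Z ≤ eN (Y' - Y) + eN ((1 - lam) • Y) := by rw [h1]; exact eN_add_le _ _
      _ = eN (Y' - Y) + ‖1 - lam‖ * eN Y := by rw [eN_smul]
      _ ≤ 2*ζ + 2*ζ/(99*ε) * 1 := by
          refine add_le_add hYY'.le ?_
          rw [heNY, mul_one, mul_one]; exact h1lam
      _ ≤ 4*ζ/(99*ε) := by rw [mul_one]; rw [show (4:ℝ)*ζ = 2*ζ + 2*ζ by ring, add_div]; linarith
  -- the vectors U and W
  set U : Fin n → 𝕜 := D.mulVec Y' with hUdef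
  set W : Fin n → 𝕜 := D.mulVec Y with hWdef
  have hUi : ∀ v : Fin n → 𝕜, ∀ i, D.mulVec v i = a i ^ p * v i := fun v i =>
    Matrix.mulVec_diagonal _ _ _
  have hUlow : ℓ₁ * (98*ε) ≤ eN U := by
    calc ℓ₁ * (98*ε) ≤ ‖a i₁ ^ p‖ * ‖Y' i₁‖ :=
        mul_le_mul_of_nonneg_left (hY'c i₁) (norm_nonneg _)
      _ = ‖U i₁‖ := by rw [hUdef, hUi, norm_mul]
      _ ≤ eN U := coord_le_eN U i₁
  have hUpos : 0 < eN U := lt_of_lt_of_le (by positivity) hUlow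
  have hY'i₁ : Y' i₁ ≠ 0 := by
    intro h
    have := hY'c i₁
    rw [h, norm_zero] at this
    linarith
  have hlamne : lam ≠ 0 := div_ne_zero hY'i₁ hYi₁
  have hWne : W ≠ 0 := by
    intro h
    have : W i₁ = 0 := by rw [h]; rfl
    rw [hWdef, hUi] at this
    exact (mul_ne_zero (zpow_ne_zero p (ha i₁)) hYi₁) this
  have hlamW : 0 < eN (lam • W) := by
    rw [eN_smul]
    exact mul_pos (norm_pos_iff.mpr hlamne) (eN_pos hWne)
  have hUW : U - lam • W = D.mulVec Z := by
    funext i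
    have h0 : (U - lam • W) i = a i ^ p * Y' i - lam * (a i ^ p * Y i) := by
      rw [Pi.sub_apply, Pi.smul_apply, smul_eq_mul, hUdef, hWdef, hUi, hUi]
    rw [h0, hUi Z i, show Z i = Y' i - lam * Y i from rfl]
    ring
  have hDZ : eN (D.mulVec Z) ≤ ℓ₂ * eN Z := by
    have hterm : ∀ j : Fin n, ‖D.mulVec Z j‖^2 ≤ ℓ₂^2 * ‖Z j‖^2 := by
      intro j
      rcases eq_or_ne j i₁ with h | h
      · rw [h, hUi, hZi₁, mul_zero, norm_zero]
        simp
      · rw [hUi, norm_mul, mul_pow]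
        exact mul_le_mul_of_nonneg_right
          (pow_le_pow_left₀ (norm_nonneg _) (hℓ₂ge j h) 2) (sq_nonneg _)
    calc eN (D.mulVec Z) = Real.sqrt (∑ i, ‖D.mulVec Z i‖^2) := rfl
      _ ≤ Real.sqrt (∑ i, ℓ₂^2 * ‖Z i‖^2) :=
        Real.sqrt_le_sqrt (Finset.sum_le_sum fun i _ => hterm i)
      _ = ℓ₂ * Real.sqrt (∑ i, ‖Z i‖^2) := by
        rw [← Finset.mul_sum, Real.sqrt_mul (sq_nonneg _), Real.sqrt_sq hℓ₂nonneg]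
      _ = ℓ₂ * eN Z := rfl
  -- the witness scalars
  set A : 𝕜 := ((eN U : ℝ) : 𝕜)⁻¹ * (ζ₀ * a₀) with hAdef
  set B : 𝕜 := ((eN (lam • W) : ℝ) : 𝕜)⁻¹ * (lam * b₀) with hBdef
  have hAeq : A • D.mulVec y' = ((eN U : ℝ) : 𝕜)⁻¹ • U := by
    rw [hAdef, mul_smul]
    congr 1
    rw [← Matrix.mulVec_smul, hUdef]
    congr 1
    rw [hY'def, smul_smul]
  have hBeq : B • D.mulVec y = ((eN (lam • W) : ℝ) : 𝕜)⁻¹ • (lam • W) := by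
    rw [hBdef, mul_smul]
    congr 1
    rw [mul_smul, ← Matrix.mulVec_smul, hWdef, hYdef]
  have hA1 : eN (A • D.mulVec y') = 1 := by
    rw [hAeq, eN_smul, norm_inv, RCLike.norm_ofReal, abs_of_pos hUpos,
      inv_mul_cancel₀ (ne_of_gt hUpos)]
  have hB1 : eN (B • D.mulVec y) = 1 := by
    rw [hBeq, eN_smul, norm_inv, RCLike.norm_ofReal, abs_of_pos hlamW,
      inv_mul_cancel₀ (ne_of_gt hlamW)]
  have hmem : eN ((1:𝕜) • A • D.mulVec y' - B • D.mulVec y) ∈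
      {r : ℝ | ∃ a' b' ζ' : 𝕜, eN (a' • D.mulVec y') = 1 ∧ eN (b' • D.mulVec y) = 1 ∧
        ‖ζ'‖ = 1 ∧ r = eN (ζ' • a' • D.mulVec y' - b' • D.mulVec y)} :=
    ⟨A, B, 1, hA1, hB1, by simp, rfl⟩
  rw [hl1]
  calc dP (D.mulVec y') (D.mulVec y)
      ≤ eN ((1:𝕜) • A • D.mulVec y' - B • D.mulVec y) := csInf_le (dP_bddBelow _ _) hmem
    _ = eN (((eN U : ℝ) : 𝕜)⁻¹ • U - ((eN (lam • W) : ℝ) : 𝕜)⁻¹ • (lam • W)) := by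
        rw [one_smul, hAeq, hBeq]
    _ ≤ 2 * eN (U - lam • W) / eN U := normalize_diff_le _ _ hUpos hlamW
    _ = 2 * eN (D.mulVec Z) / eN U := by rw [hUW]
    _ ≤ 2 * (ℓ₂ * (4*ζ/(99*ε))) / (ℓ₁ * (98*ε)) := by
        have hc : (0:ℝ) ≤ 2 * (ℓ₂ * (4*ζ/(99*ε))) :=
          mul_nonneg (by norm_num) (mul_nonneg hℓ₂nonneg (by positivity))
        have hd : (0:ℝ) < ℓ₁ * (98*ε) := mul_pos hℓ₁pos (by linarith)
        refine div_le_div₀ hc ?_ hd hUlow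
        have h2 := hDZ.trans (mul_le_mul_of_nonneg_left hZbound hℓ₂nonneg)
        linarith
    _ ≤ ζ / ε ^ 2 * (ℓ₂ / ℓ₁) := by
        have hpos : 0 ≤ ζ / ε ^ 2 * (ℓ₂ / ℓ₁) := by positivity
        have heq : 2 * (ℓ₂ * (4*ζ/(99*ε))) / (ℓ₁ * (98*ε))
            = (8/9702) * (ζ / ε ^ 2 * (ℓ₂ / ℓ₁)) := by
          field_simp
          ring
        rw [heq]
        nlinarith
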